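/- arXiv:1907.03617 — 2 statements merged into one kernel-verified Lean document; each statement's English description precedes it below -/
import Mathlib

section
/- Let (G, μ) be a weighted graph, let p ∈ [1, ∞), and let k be an integer with 1 ≤ k ≤ #V − 1. Then ν_{k,p}(G, μ) ≤ ν̂_{k,p}(G, μ) ≤ 2^p · ν_{k,p}(G, μ). -/
open scoped BigOperators Classical

noncomputable section

/-- A weighted graph: a simple connected finite graph together with a symmetric
nonnegative weight which is positive exactly on edges. -/
structure WeightedGraph (V : Type*) [Fintype V] where
  G : SimpleGraph V
  connected : G.Connected
  w : V → V → ℝ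
  symm : ∀ x y, w x y = w y x
  nonneg : ∀ x y, 0 ≤ w x y
  pos_iff_adj : ∀ x y, 0 < w x y ↔ G.Adj x y

namespace WeightedGraph

variable {V : Type*} [Fintype V]

/-- The weight `μ(x)` of a vertex. -/
def vwt (W : WeightedGraph V) (x : V) : ℝ := ∑ y, W.w x y

/-- The weight `μ(A)` of a set of vertices. -/
def swt (W : WeightedGraph V) (A : Set V) : ℝ :=
  ∑ x ∈ Finset.univ.filter (· ∈ A), W.vwt x

/-- The weighted mean of a function. -/
def mean (W : WeightedGraph V) (φ : V → ℝ) : ℝ :=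
  (∑ x, φ x * W.vwt x) / W.swt Set.univ

/-- The `p`-energy of a function. -/
def energy (W : WeightedGraph V) (p : ℝ) (φ : V → ℝ) : ℝ :=
  ∑ x, ∑ y, |φ y - φ x| ^ p * W.w x y

/-- The `k`-th discrete `p`-Poincaré constant. -/
def nu (W : WeightedGraph V) (k : ℕ) (p : ℝ) : ℝ :=
  sInf {s | ∃ L : Submodule ℝ (V → ℝ), Module.finrank ℝ L = k ∧
    (∀ φ ∈ L, (∃ c : ℝ, ∀ x, φ x = c) → φ = 0) ∧
    s = sSup {r | ∃ φ ∈ L, φ ≠ 0 ∧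
      r = W.energy p φ / (2 * ∑ x, |φ x - W.mean φ| ^ p * W.vwt x)}}

/-- The `k`-th discrete modified `p`-Poincaré constant. -/
def nuHat (W : WeightedGraph V) (k : ℕ) (p : ℝ) : ℝ :=
  sInf {s | ∃ L : Submodule ℝ (V → ℝ), Module.finrank ℝ L = k + 1 ∧
    s = sSup {r | ∃ φ ∈ L, φ ≠ 0 ∧
      r = W.energy p φ / (2 * ∑ x, |φ x| ^ p * W.vwt x)}}

/-- The vertex boundary of a set of vertices. -/
def vbdry (W : WeightedGraph V) (Ω : Set V) : Set V :=
  {x ∈ Ω | ∃ y ∉ Ω, 0 < W.w x y}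

/-- The `k`-th discrete Dirichlet `p`-Poincaré constant of `Ω`; functions on `Ω`
vanishing on the vertex boundary are modelled as functions on `V` vanishing
outside `Ω \ ∂ᵥΩ`. -/
def nuD (W : WeightedGraph V) (Ω : Set V) (k : ℕ) (p : ℝ) : ℝ :=
  sInf {s | ∃ L : Submodule ℝ (V → ℝ), Module.finrank ℝ L = k ∧
    (∀ φ ∈ L, ∀ x, x ∉ Ω \ W.vbdry Ω → φ x = 0) ∧
    s = sSup {r | ∃ φ ∈ L, φ ≠ 0 ∧
      r = (∑ x ∈ Finset.univ.filter (· ∈ Ω), ∑ y ∈ Finset.univ.filter (· ∈ Ω),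
            |φ y - φ x| ^ p * W.w x y) /
          (2 * ∑ x ∈ Finset.univ.filter (· ∈ Ω), |φ x| ^ p * W.vwt x)}}

/-- The closed `r`-neighborhood of a set of vertices w.r.t. the graph distance. -/
def ball (W : WeightedGraph V) (A : Set V) (r : ℝ) : Set V :=
  {x | ∃ a ∈ A, (W.G.dist x a : ℝ) ≤ r}

/-- The graph distance between two sets of vertices. -/
def setDist (W : WeightedGraph V) (A B : Set V) : ℕ :=
  sInf {n : ℕ | ∃ a ∈ A, ∃ b ∈ B, W.G.dist a b = n}

end WeightedGraph
set_option linter.unusedSectionVars false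
namespace PoincareAux
open Module Finset WeightedGraph
open scoped NNReal

variable {V : Type*} [Fintype V] (W : WeightedGraph V) {p : ℝ}

lemma rpow_two_ineq {a b p : ℝ} (ha : 0 ≤ a) (hb : 0 ≤ b) (hp : 1 ≤ p) :
    (a + b) ^ p ≤ 2 ^ (p - 1) * (a ^ p + b ^ p) := by
  exact_mod_cast NNReal.rpow_add_le_mul_rpow_add_rpow ⟨a, ha⟩ ⟨b, hb⟩ hp

lemma two_rpow_sub_one_mul_two {p : ℝ} : (2 : ℝ) ^ (p - 1) * 2 = 2 ^ p := by
  rw [Real.rpow_sub two_pos, Real.rpow_one]; field_simp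

lemma exists_sub_finrank {M : Type*} [AddCommGroup M] [Module ℝ M] [FiniteDimensional ℝ M]
    (N : Submodule ℝ M) {k : ℕ} (hk : k ≤ finrank ℝ N) :
    ∃ K : Submodule ℝ M, K ≤ N ∧ finrank ℝ K = k := by
  obtain ⟨f, hf⟩ := exists_linearIndependent_of_le_finrank hk
  refine ⟨(Submodule.span ℝ (Set.range f)).map N.subtype, Submodule.map_subtype_le _ _, ?_⟩
  rw [← (Submodule.equivMapOfInjective N.subtype N.injective_subtype _).finrank_eq,
    finrank_span_eq_card hf, Fintype.card_fin]

lemma exists_mem_ne_zero {L : Submodule ℝ (V → ℝ)} (h : 0 < finrank ℝ L) :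
    ∃ φ ∈ L, φ ≠ 0 := by
  by_contra hc
  push_neg at hc
  rw [show L = ⊥ from (Submodule.eq_bot_iff L).2 hc, finrank_bot] at h
  exact lt_irrefl 0 h

lemma vwt_pos (hV : 1 < Fintype.card V) (x : V) : 0 < W.vwt x := by
  obtain ⟨y, hy⟩ := Fintype.exists_ne_of_one_lt_card hV x
  obtain ⟨wk⟩ := W.connected.preconnected x y
  have hadj : ∃ z, W.G.Adj x z := by
    cases wk with
    | nil => exact absurd rfl hy.symm
    | cons h q => exact ⟨_, h⟩
  obtain ⟨z, hz⟩ := hadj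
  exact Finset.sum_pos' (fun i _ => W.nonneg x i)
    ⟨z, Finset.mem_univ z, (W.pos_iff_adj x z).2 hz⟩

lemma swt_univ : W.swt Set.univ = ∑ x, W.vwt x := by
  simp [WeightedGraph.swt]

lemma swt_univ_pos (hV : 1 < Fintype.card V) : 0 < W.swt Set.univ := by
  have : Nonempty V := Fintype.card_pos_iff.mp (by omega)
  rw [swt_univ]
  exact Finset.sum_pos (fun x _ => vwt_pos W hV x) ⟨Classical.arbitrary V, Finset.mem_univ _⟩


lemma wsum_smul (c : ℝ) (φ : V → ℝ) :
    ∑ x, (c • φ) x * W.vwt x = c * ∑ x, φ x * W.vwt x := by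
  rw [Finset.mul_sum]
  exact Finset.sum_congr rfl fun x _ => by simp [mul_assoc]

/-- The weighted-sum linear functional. -/
def wsum : (V → ℝ) →ₗ[ℝ] ℝ where
  toFun φ := ∑ x, φ x * W.vwt x
  map_add' φ ψ := by
    simp [add_mul, Finset.sum_add_distrib]
  map_smul' c φ := by
    simpa using wsum_smul W c φ

lemma mean_eq_wsum (φ : V → ℝ) : W.mean φ = wsum W φ / W.swt Set.univ := rfl

lemma mean_add_const (hV : 1 < Fintype.card V) (ψ : V → ℝ) (c : ℝ) :
    W.mean (fun x => ψ x + c) = W.mean ψ + c := by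
  have hT : W.swt Set.univ ≠ 0 := (swt_univ_pos W hV).ne'
  have h : ∑ x, (ψ x + c) * W.vwt x = (∑ x, ψ x * W.vwt x) + c * W.swt Set.univ := by
    rw [swt_univ, Finset.mul_sum, ← Finset.sum_add_distrib]
    exact Finset.sum_congr rfl fun x _ => by ring
  unfold WeightedGraph.mean
  rw [h, add_div, mul_div_assoc, div_self hT, mul_one]

lemma energy_nonneg (φ : V → ℝ) : 0 ≤ W.energy p φ :=
  Finset.sum_nonneg fun x _ => Finset.sum_nonneg fun y _ =>
    mul_nonneg (Real.rpow_nonneg (abs_nonneg _) p) (W.nonneg x y)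

lemma energy_add_const (φ : V → ℝ) (c : ℝ) :
    W.energy p (fun x => φ x + c) = W.energy p φ := by
  unfold WeightedGraph.energy
  congr 1; ext x; congr 1; ext y
  congr 2
  ring

lemma D_nonneg (φ : V → ℝ) : 0 ≤ ∑ x, |φ x| ^ p * W.vwt x :=
  Finset.sum_nonneg fun x _ =>
    mul_nonneg (Real.rpow_nonneg (abs_nonneg _) p) (Finset.sum_nonneg fun y _ => W.nonneg x y)

lemma D_pos (hV : 1 < Fintype.card V) (hp : 1 ≤ p) {φ : V → ℝ} (hφ : φ ≠ 0) :
    0 < ∑ x, |φ x| ^ p * W.vwt x := by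
  obtain ⟨x, hx⟩ : ∃ x, φ x ≠ 0 := by
    by_contra h; push_neg at h; exact hφ (funext h)
  exact Finset.sum_pos' (fun i _ => mul_nonneg (Real.rpow_nonneg (abs_nonneg _) p) (vwt_pos W hV i).le)
    ⟨x, Finset.mem_univ x, mul_pos (Real.rpow_pos_of_pos (abs_pos.2 hx) p) (vwt_pos W hV x)⟩

lemma jensen (hV : 1 < Fintype.card V) (hp : 1 ≤ p) (φ : V → ℝ) :
    |W.mean φ| ^ p * W.swt Set.univ ≤ ∑ x, |φ x| ^ p * W.vwt x := by
  have hT : 0 < W.swt Set.univ := swt_univ_pos W hV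
  have h1 : |W.mean φ| ≤ ∑ x, (W.vwt x / W.swt Set.univ) * |φ x| := by
    rw [mean_eq_wsum, abs_div, abs_of_pos hT, div_le_iff₀ hT, Finset.sum_mul]
    calc |wsum W φ| ≤ ∑ x, |φ x * W.vwt x| := Finset.abs_sum_le_sum_abs _ _
      _ = ∑ x, W.vwt x / W.swt Set.univ * |φ x| * W.swt Set.univ := by
          refine Finset.sum_congr rfl fun x _ => ?_
          rw [abs_mul, abs_of_pos (vwt_pos W hV x)]
          have h := (swt_univ_pos W hV).ne'
          have : W.vwt x / W.swt Set.univ * |φ x| * W.swt Set.univ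
              = |φ x| * W.vwt x * (W.swt Set.univ / W.swt Set.univ) := by ring
          rw [this, div_self h, mul_one]
  have h2 := Real.rpow_arith_mean_le_arith_mean_rpow Finset.univ
    (fun x => W.vwt x / W.swt Set.univ) (fun x => |φ x|)
    (fun i _ => div_nonneg (vwt_pos W hV i).le hT.le)
    (by rw [← Finset.sum_div, ← swt_univ]; exact div_self hT.ne')
    (fun i _ => abs_nonneg _) hp
  have h3 : |W.mean φ| ^ p ≤ ∑ x, (W.vwt x / W.swt Set.univ) * |φ x| ^ p :=
    le_trans (Real.rpow_le_rpow (abs_nonneg _) h1 (le_trans zero_le_one hp)) h2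
  calc |W.mean φ| ^ p * W.swt Set.univ
      ≤ (∑ x, (W.vwt x / W.swt Set.univ) * |φ x| ^ p) * W.swt Set.univ :=
        mul_le_mul_of_nonneg_right h3 hT.le
    _ = ∑ x, |φ x| ^ p * W.vwt x := by
        rw [Finset.sum_mul]
        refine Finset.sum_congr rfl fun x _ => ?_
        have h := (swt_univ_pos W hV).ne'
        have : W.vwt x / W.swt Set.univ * |φ x| ^ p * W.swt Set.univ
            = |φ x| ^ p * W.vwt x * (W.swt Set.univ / W.swt Set.univ) := by ring
        rw [this, div_self h, mul_one]
lemma Dm_le (hV : 1 < Fintype.card V) (hp : 1 ≤ p) (φ : V → ℝ) :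
    ∑ x, |φ x - W.mean φ| ^ p * W.vwt x ≤ 2 ^ p * ∑ x, |φ x| ^ p * W.vwt x := by
  have key : ∀ x : V, |φ x - W.mean φ| ^ p ≤ 2 ^ (p - 1) * (|φ x| ^ p + |W.mean φ| ^ p) := by
    intro x
    calc |φ x - W.mean φ| ^ p ≤ (|φ x| + |W.mean φ|) ^ p :=
          Real.rpow_le_rpow (abs_nonneg _) (abs_sub _ _) (le_trans zero_le_one hp)
      _ ≤ 2 ^ (p - 1) * (|φ x| ^ p + |W.mean φ| ^ p) :=
          rpow_two_ineq (abs_nonneg _) (abs_nonneg _) hp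
  calc ∑ x, |φ x - W.mean φ| ^ p * W.vwt x
      ≤ ∑ x, 2 ^ (p - 1) * (|φ x| ^ p + |W.mean φ| ^ p) * W.vwt x :=
        Finset.sum_le_sum fun x _ => mul_le_mul_of_nonneg_right (key x) (vwt_pos W hV x).le
    _ = 2 ^ (p - 1) * ((∑ x, |φ x| ^ p * W.vwt x) + |W.mean φ| ^ p * W.swt Set.univ) := by
        rw [swt_univ, Finset.mul_sum, ← Finset.sum_add_distrib, Finset.mul_sum]
        exact Finset.sum_congr rfl fun x _ => by ring
    _ ≤ 2 ^ (p - 1) * ((∑ x, |φ x| ^ p * W.vwt x) + ∑ x, |φ x| ^ p * W.vwt x) :=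
        mul_le_mul_of_nonneg_left (add_le_add le_rfl (jensen W hV hp φ))
          (Real.rpow_nonneg (by norm_num) _)
    _ = 2 ^ p * ∑ x, |φ x| ^ p * W.vwt x := by
        rw [← two_rpow_sub_one_mul_two (p := p)]; ring

lemma energy_le_D (hp : 1 ≤ p) (φ : V → ℝ) :
    W.energy p φ ≤ 2 ^ p * ∑ x, |φ x| ^ p * W.vwt x := by
  have key : ∀ x y : V, |φ y - φ x| ^ p * W.w x y
      ≤ 2 ^ (p - 1) * (|φ y| ^ p + |φ x| ^ p) * W.w x y := by
    intro x y
    refine mul_le_mul_of_nonneg_right ?_ (W.nonneg x y)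
    calc |φ y - φ x| ^ p ≤ (|φ y| + |φ x|) ^ p :=
          Real.rpow_le_rpow (abs_nonneg _) (abs_sub _ _) (le_trans zero_le_one hp)
      _ ≤ 2 ^ (p - 1) * (|φ y| ^ p + |φ x| ^ p) :=
          rpow_two_ineq (abs_nonneg _) (abs_nonneg _) hp
  have hswap : ∑ x, ∑ y, |φ y| ^ p * W.w x y = ∑ x, |φ x| ^ p * W.vwt x := by
    rw [Finset.sum_comm]
    refine Finset.sum_congr rfl fun y _ => ?_
    rw [← Finset.mul_sum]
    congr 1
    unfold WeightedGraph.vwt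
    exact Finset.sum_congr rfl fun x _ => W.symm x y
  calc W.energy p φ ≤ ∑ x, ∑ y, 2 ^ (p - 1) * (|φ y| ^ p + |φ x| ^ p) * W.w x y :=
        Finset.sum_le_sum fun x _ => Finset.sum_le_sum fun y _ => key x y
    _ = 2 ^ (p - 1) * ((∑ x, ∑ y, |φ y| ^ p * W.w x y) + ∑ x, ∑ y, |φ x| ^ p * W.w x y) := by
        rw [← Finset.sum_add_distrib, Finset.mul_sum]
        refine Finset.sum_congr rfl fun x _ => ?_
        rw [← Finset.sum_add_distrib, Finset.mul_sum]
        exact Finset.sum_congr rfl fun y _ => by ring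
    _ = 2 ^ (p - 1) * ((∑ x, |φ x| ^ p * W.vwt x) + ∑ x, |φ x| ^ p * W.vwt x) := by
        rw [hswap]
        congr 2
        refine Finset.sum_congr rfl fun x _ => ?_
        rw [← Finset.mul_sum]
        rfl
    _ = 2 ^ p * ∑ x, |φ x| ^ p * W.vwt x := by
        rw [← two_rpow_sub_one_mul_two (p := p)]; ring

lemma energy_le_Dm (hV : 1 < Fintype.card V) (hp : 1 ≤ p) (φ : V → ℝ) :
    W.energy p φ ≤ 2 ^ p * ∑ x, |φ x - W.mean φ| ^ p * W.vwt x := by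
  have h1 : W.energy p φ = W.energy p (fun x => φ x + -W.mean φ) :=
    (energy_add_const W φ (-W.mean φ)).symm
  have h2 := energy_le_D W hp (fun x => φ x + -W.mean φ)
  simpa [← sub_eq_add_neg] using h1 ▸ h2
lemma wsum_apply (φ : V → ℝ) : wsum W φ = ∑ x, φ x * W.vwt x := rfl

lemma Dm_pos (hV : 1 < Fintype.card V) (hp : 1 ≤ p) {φ : V → ℝ}
    (h : ∃ x, φ x ≠ W.mean φ) : 0 < ∑ x, |φ x - W.mean φ| ^ p * W.vwt x := by
  obtain ⟨x, hx⟩ := h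
  exact Finset.sum_pos'
    (fun i _ => mul_nonneg (Real.rpow_nonneg (abs_nonneg _) p) (vwt_pos W hV i).le)
    ⟨x, Finset.mem_univ x,
      mul_pos (Real.rpow_pos_of_pos (abs_pos.2 (sub_ne_zero.2 hx)) p) (vwt_pos W hV x)⟩

/-- The ratio set for `nu`. -/
def RS (p : ℝ) (L : Submodule ℝ (V → ℝ)) : Set ℝ :=
  {r | ∃ φ ∈ L, φ ≠ 0 ∧
    r = W.energy p φ / (2 * ∑ x, |φ x - W.mean φ| ^ p * W.vwt x)}

/-- The ratio set for `nuHat`. -/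
def RSHat (p : ℝ) (L : Submodule ℝ (V → ℝ)) : Set ℝ :=
  {r | ∃ φ ∈ L, φ ≠ 0 ∧
    r = W.energy p φ / (2 * ∑ x, |φ x| ^ p * W.vwt x)}

lemma RSHat_bounds (hV : 1 < Fintype.card V) (hp : 1 ≤ p) {L : Submodule ℝ (V → ℝ)} {r : ℝ}
    (hr : r ∈ RSHat W p L) : 0 ≤ r ∧ r ≤ 2 ^ (p - 1) := by
  obtain ⟨φ, -, hφne, rfl⟩ := hr
  have hD := D_pos W hV hp hφne
  constructor
  · exact div_nonneg (energy_nonneg W φ) (by linarith)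
  · rw [div_le_iff₀ (by linarith)]
    calc W.energy p φ ≤ 2 ^ p * ∑ x, |φ x| ^ p * W.vwt x := energy_le_D W hp φ
      _ = 2 ^ (p - 1) * (2 * ∑ x, |φ x| ^ p * W.vwt x) := by
          rw [← two_rpow_sub_one_mul_two (p := p)]; ring

lemma nonconst_of_mem {L : Submodule ℝ (V → ℝ)}
    (hnc : ∀ φ ∈ L, (∃ c : ℝ, ∀ x, φ x = c) → φ = 0) {φ : V → ℝ}
    (hφL : φ ∈ L) (hφne : φ ≠ 0) : ∃ x, φ x ≠ W.mean φ := by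
  by_contra h
  push_neg at h
  exact hφne (hnc φ hφL ⟨W.mean φ, h⟩)

lemma RS_bounds (hV : 1 < Fintype.card V) (hp : 1 ≤ p) {L : Submodule ℝ (V → ℝ)}
    (hnc : ∀ φ ∈ L, (∃ c : ℝ, ∀ x, φ x = c) → φ = 0) {r : ℝ}
    (hr : r ∈ RS W p L) : 0 ≤ r ∧ r ≤ 2 ^ (p - 1) := by
  obtain ⟨φ, hφL, hφne, rfl⟩ := hr
  have hD := Dm_pos W hV hp (nonconst_of_mem W hnc hφL hφne)
  constructor
  · exact div_nonneg (energy_nonneg W φ) (by linarith)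
  · rw [div_le_iff₀ (by linarith)]
    calc W.energy p φ ≤ 2 ^ p * ∑ x, |φ x - W.mean φ| ^ p * W.vwt x := energy_le_Dm W hV hp φ
      _ = 2 ^ (p - 1) * (2 * ∑ x, |φ x - W.mean φ| ^ p * W.vwt x) := by
          rw [← two_rpow_sub_one_mul_two (p := p)]; ring

lemma RS_nonempty {L : Submodule ℝ (V → ℝ)} (h : 0 < finrank ℝ L) (p : ℝ) :
    (RS W p L).Nonempty := by
  obtain ⟨φ, h1, h2⟩ := exists_mem_ne_zero h
  exact ⟨_, φ, h1, h2, rfl⟩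

lemma RSHat_nonempty {L : Submodule ℝ (V → ℝ)} (h : 0 < finrank ℝ L) (p : ℝ) :
    (RSHat W p L).Nonempty := by
  obtain ⟨φ, h1, h2⟩ := exists_mem_ne_zero h
  exact ⟨_, φ, h1, h2, rfl⟩

lemma RSHat_bddAbove (hV : 1 < Fintype.card V) (hp : 1 ≤ p) (L : Submodule ℝ (V → ℝ)) :
    BddAbove (RSHat W p L) :=
  ⟨2 ^ (p - 1), fun _ hr => (RSHat_bounds W hV hp hr).2⟩

lemma RS_bddAbove (hV : 1 < Fintype.card V) (hp : 1 ≤ p) {L : Submodule ℝ (V → ℝ)}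
    (hnc : ∀ φ ∈ L, (∃ c : ℝ, ∀ x, φ x = c) → φ = 0) :
    BddAbove (RS W p L) :=
  ⟨2 ^ (p - 1), fun _ hr => (RS_bounds W hV hp hnc hr).2⟩

end PoincareAux
set_option synthInstance.maxHeartbeats 1000000 in
set_option maxHeartbeats 2000000 in
open WeightedGraph PoincareAux Module in
/-- For a weighted graph, `1 ≤ k ≤ #V - 1` and `p ∈ [1,∞)`:
`ν_{k,p}(G,μ) ≤ ν̂_{k,p}(G,μ) ≤ 2^p ν_{k,p}(G,μ)`. -/
theorem nu_le_nuHat_le_two_rpow_mul_nu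
    {V : Type*} [Fintype V] (W : WeightedGraph V) (p : ℝ) (hp : 1 ≤ p)
    (k : ℕ) (hk₁ : 1 ≤ k) (hk₂ : k ≤ Fintype.card V - 1) :
    W.nu k p ≤ W.nuHat k p ∧ W.nuHat k p ≤ (2 : ℝ) ^ p * W.nu k p := by
  classical
  have hcard : 0 < Fintype.card V := by
    by_contra h
    push_neg at h
    interval_cases h' : Fintype.card V <;> omega
  have hV : 1 < Fintype.card V := by omega
  haveI : Nonempty V := Fintype.card_pos_iff.mp hcard
  have hVk : k + 1 ≤ Fintype.card V := by omega
  have hTpos : 0 < W.swt Set.univ := swt_univ_pos W hV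
  have h2p : (0 : ℝ) < 2 ^ p := Real.rpow_pos_of_pos two_pos p
  have hp0 : 0 ≤ p := le_trans zero_le_one hp
  set S₁ : Set ℝ := {s | ∃ L : Submodule ℝ (V → ℝ), Module.finrank ℝ L = k ∧
    (∀ φ ∈ L, (∃ c : ℝ, ∀ x, φ x = c) → φ = 0) ∧ s = sSup (RS W p L)} with hS₁def
  set S₂ : Set ℝ := {s | ∃ L : Submodule ℝ (V → ℝ), Module.finrank ℝ L = k + 1 ∧
    s = sSup (RSHat W p L)} with hS₂def
  have hnu : W.nu k p = sInf S₁ := rfl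
  have hnuHat : W.nuHat k p = sInf S₂ := rfl
  have hfull : finrank ℝ (V → ℝ) = Fintype.card V := Module.finrank_fintype_fun_eq_card ℝ
  -- bounded below by 0
  have hS₁bdd : BddBelow S₁ := by
    refine ⟨0, ?_⟩
    rintro s ⟨L, hL, hnc, rfl⟩
    obtain ⟨r, hr⟩ := RS_nonempty W (L := L) (by omega) p
    exact le_trans (RS_bounds W hV hp hnc hr).1 (le_csSup (RS_bddAbove W hV hp hnc) hr)
  have hS₂bdd : BddBelow S₂ := by
    refine ⟨0, ?_⟩
    rintro s ⟨L, hL, rfl⟩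
    obtain ⟨r, hr⟩ := RSHat_nonempty W (L := L) (by omega) p
    exact le_trans (RSHat_bounds W hV hp hr).1 (le_csSup (RSHat_bddAbove W hV hp L) hr)
  -- S₁ and S₂ are nonempty
  have hS₂ne : S₂.Nonempty := by
    obtain ⟨K, -, hK⟩ := exists_sub_finrank (⊤ : Submodule ℝ (V → ℝ))
      (k := k + 1) (by rw [finrank_top, hfull]; exact hVk)
    exact ⟨sSup (RSHat W p K), K, hK, rfl⟩
  have hS₁ne : S₁.Nonempty := by
    set x₀ : V := Classical.arbitrary V
    set f : (V → ℝ) →ₗ[ℝ] ℝ := LinearMap.proj x₀ with hf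
    have hker : k ≤ finrank ℝ (LinearMap.ker f) := by
      have h1 := LinearMap.finrank_range_add_finrank_ker f
      have h2 : finrank ℝ (LinearMap.range f) ≤ 1 := by
        have := Submodule.finrank_le (LinearMap.range f)
        rwa [finrank_self] at this
      rw [hfull] at h1
      omega
    obtain ⟨K, hKle, hKrank⟩ := exists_sub_finrank (LinearMap.ker f) hker
    refine ⟨sSup (RS W p K), K, hKrank, ?_, rfl⟩
    rintro φ hφ ⟨c, hc⟩
    have h0 : φ x₀ = 0 := LinearMap.mem_ker.mp (hKle hφ)
    have hc0 : c = 0 := by rw [← hc x₀, h0]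
    funext x
    rw [hc x, hc0]
    rfl
  rw [hnu, hnuHat]
  constructor
  · -- Part 1 : nu ≤ nuHat
    apply le_csInf hS₂ne
    rintro s ⟨L', hrank, rfl⟩
    set f : L' →ₗ[ℝ] ℝ := (wsum W).comp L'.subtype with hf
    have hker : k ≤ finrank ℝ (LinearMap.ker f) := by
      have h1 := LinearMap.finrank_range_add_finrank_ker f
      have h2 : finrank ℝ (LinearMap.range f) ≤ 1 := by
        have := Submodule.finrank_le (LinearMap.range f)
        rwa [finrank_self] at this
      rw [hrank] at h1
      omega
    obtain ⟨K₀, hK₀le, hK₀rank⟩ := exists_sub_finrank (LinearMap.ker f) hker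
    set K : Submodule ℝ (V → ℝ) := K₀.map L'.subtype with hK
    have hKrank : finrank ℝ K = k := by
      have he : finrank ℝ K₀ = finrank ℝ (K₀.map L'.subtype) :=
        (Submodule.equivMapOfInjective L'.subtype L'.injective_subtype K₀).finrank_eq
      rw [hK, ← he, hK₀rank]
    have hKsub : ∀ φ ∈ K, φ ∈ L' ∧ wsum W φ = 0 := by
      rintro φ hφ
      obtain ⟨y, hy, rfl⟩ := Submodule.mem_map.mp hφ
      exact ⟨y.2, LinearMap.mem_ker.mp (hK₀le hy)⟩
    have hmean0 : ∀ φ ∈ K, W.mean φ = 0 := fun φ hφ => by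
      rw [mean_eq_wsum, (hKsub φ hφ).2, zero_div]
    have hnc : ∀ φ ∈ K, (∃ c : ℝ, ∀ x, φ x = c) → φ = 0 := by
      rintro φ hφ ⟨c, hc⟩
      have h0 : wsum W φ = 0 := (hKsub φ hφ).2
      have h1 : wsum W φ = c * W.swt Set.univ := by
        rw [wsum_apply, swt_univ, Finset.mul_sum]
        exact Finset.sum_congr rfl fun x _ => by rw [hc x]
      have hc0 : c = 0 := by
        rw [h0] at h1
        exact ((mul_eq_zero.mp h1.symm).resolve_right hTpos.ne').symm ▸
          ((mul_eq_zero.mp h1.symm).resolve_right hTpos.ne')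
      funext x
      rw [hc x, hc0]
      rfl
    have hsub : RS W p K ⊆ RSHat W p L' := by
      rintro r ⟨φ, hφK, hφne, rfl⟩
      refine ⟨φ, (hKsub φ hφK).1, hφne, ?_⟩
      rw [hmean0 φ hφK]
      simp
    refine le_trans (csInf_le hS₁bdd ⟨K, hKrank, hnc, rfl⟩) ?_
    exact csSup_le_csSup (RSHat_bddAbove W hV hp L') (RS_nonempty W (by omega) p) hsub
  · -- Part 2 : nuHat ≤ 2^p nu
    have key : ∀ s ∈ S₁, sInf S₂ ≤ 2 ^ p * s := by
      rintro s ⟨K, hKrank, hnc, rfl⟩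
      have hone_ne : (1 : V → ℝ) ≠ 0 := by
        intro h
        have := congrFun h (Classical.arbitrary V)
        norm_num at this
      set L' : Submodule ℝ (V → ℝ) := K ⊔ Submodule.span ℝ {(1 : V → ℝ)} with hL'
      have hinf : K ⊓ Submodule.span ℝ {(1 : V → ℝ)} = ⊥ := by
        rw [Submodule.eq_bot_iff]
        rintro φ ⟨hφK, hφs⟩
        obtain ⟨c, rfl⟩ := Submodule.mem_span_singleton.mp hφs
        exact hnc _ hφK ⟨c, fun x => by simp⟩
      have hrank' : finrank ℝ L' = k + 1 := by
        have h := Submodule.finrank_sup_add_finrank_inf_eq K (Submodule.span ℝ {(1 : V → ℝ)})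
        rw [hinf, finrank_bot, finrank_span_singleton hone_ne, hKrank] at h
        rw [hL']
        omega
      have hRSne : (RS W p K).Nonempty := RS_nonempty W (by omega) p
      have hsupK_nonneg : 0 ≤ sSup (RS W p K) := by
        obtain ⟨r, hr⟩ := hRSne
        exact le_trans (RS_bounds W hV hp hnc hr).1 (le_csSup (RS_bddAbove W hV hp hnc) hr)
      have hsup : sSup (RSHat W p L') ≤ 2 ^ p * sSup (RS W p K) := by
        apply csSup_le (RSHat_nonempty W (by omega) p)
        rintro r ⟨φ, hφL', hφne, rfl⟩
        obtain ⟨ψ, hψK, ζ, hζ, hφ⟩ := Submodule.mem_sup.mp hφL'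
        obtain ⟨c, rfl⟩ := Submodule.mem_span_singleton.mp hζ
        have hφpt : ∀ x, φ x = ψ x + c := fun x => by rw [← hφ]; simp
        by_cases hψ0 : ψ = 0
        · have hE : W.energy p φ = 0 := by
            unfold WeightedGraph.energy
            refine Finset.sum_eq_zero fun x _ => Finset.sum_eq_zero fun y _ => ?_
            have hd : φ y - φ x = 0 := by
              rw [hφpt x, hφpt y, hψ0]
              simp
            rw [hd, abs_zero, Real.zero_rpow (by linarith : p ≠ 0), zero_mul]
          rw [hE, zero_div]
          exact mul_nonneg h2p.le hsupK_nonneg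
        · have hle1 : W.energy p ψ / (2 * ∑ x, |ψ x - W.mean ψ| ^ p * W.vwt x)
              ≤ sSup (RS W p K) :=
            le_csSup (RS_bddAbove W hV hp hnc) ⟨ψ, hψK, hψ0, rfl⟩
          have hφfun : φ = fun x => ψ x + c := funext hφpt
          have hEeq : W.energy p φ = W.energy p ψ := by rw [hφfun, energy_add_const]
          have hmφ : W.mean φ = W.mean ψ + c := by rw [hφfun, mean_add_const W hV]
          have hDmeq : ∑ x, |ψ x - W.mean ψ| ^ p * W.vwt x
              = ∑ x, |φ x - W.mean φ| ^ p * W.vwt x := by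
            refine Finset.sum_congr rfl fun x _ => ?_
            have h : ψ x - W.mean ψ = φ x - W.mean φ := by rw [hφpt x, hmφ]; ring
            rw [h]
          have hDm : ∑ x, |ψ x - W.mean ψ| ^ p * W.vwt x
              ≤ 2 ^ p * ∑ x, |φ x| ^ p * W.vwt x := by
            rw [hDmeq]
            exact Dm_le W hV hp φ
          have hDφ : 0 < ∑ x, |φ x| ^ p * W.vwt x := D_pos W hV hp hφne
          have hDmψ : 0 < ∑ x, |ψ x - W.mean ψ| ^ p * W.vwt x :=
            Dm_pos W hV hp (nonconst_of_mem W hnc hψK hψ0)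
          have hE0 : 0 ≤ W.energy p ψ := energy_nonneg W ψ
          have hr2 : W.energy p φ / (2 * ∑ x, |φ x| ^ p * W.vwt x)
              ≤ 2 ^ p * (W.energy p ψ / (2 * ∑ x, |ψ x - W.mean ψ| ^ p * W.vwt x)) := by
            rw [hEeq, mul_div_assoc']
            rw [div_le_div_iff₀ (by linarith) (by linarith)]
            nlinarith [mul_le_mul_of_nonneg_left hDm hE0]
          exact le_trans hr2 (mul_le_mul_of_nonneg_left hle1 h2p.le)
      exact le_trans (csInf_le hS₂bdd ⟨L', hrank', rfl⟩) hsup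
    have h3 : sInf S₂ / 2 ^ p ≤ sInf S₁ := by
      apply le_csInf hS₁ne
      intro s hs
      rw [div_le_iff₀ h2p]
      linarith [key s hs]
    calc sInf S₂ = sInf S₂ / 2 ^ p * 2 ^ p := by field_simp
      _ ≤ sInf S₁ * 2 ^ p := mul_le_mul_of_nonneg_right h3 h2p.le
      _ = 2 ^ p * sInf S₁ := mul_comm _ _
end
end

section
/- Let (G, μ) be a weighted graph, let p ∈ [1, ∞), let k ≥ 0, and let Ω_0, Ω_1, …, Ω_k ⊆ V be pairwise disjoint subsets such that each Ω_α \ ∂_v Ω_α is nonempty. Then ν^D_{k+1,p}(Ω_0 ⊔ Ω_1 ⊔ ⋯ ⊔ Ω_k, μ) ≤ max_{α = 0, …, k} ν^D_{1,p}(Ω_α, μ). -/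
open scoped BigOperators Classical

noncomputable section

namespace DDP

open WeightedGraph

variable {V : Type*} [Fintype V]

lemma vwt_nonneg (W : WeightedGraph V) (x : V) : 0 ≤ W.vwt x :=
  Finset.sum_nonneg fun y _ => W.nonneg x y

def dnum (W : WeightedGraph V) (Ω : Set V) (p : ℝ) (φ : V → ℝ) : ℝ :=
  ∑ x ∈ Finset.univ.filter (· ∈ Ω), ∑ y ∈ Finset.univ.filter (· ∈ Ω),
    |φ y - φ x| ^ p * W.w x y

def dden (W : WeightedGraph V) (Ω : Set V) (p : ℝ) (φ : V → ℝ) : ℝ :=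
  2 * ∑ x ∈ Finset.univ.filter (· ∈ Ω), |φ x| ^ p * W.vwt x

lemma dnum_nonneg (W : WeightedGraph V) (Ω : Set V) (p : ℝ) (φ : V → ℝ) :
    0 ≤ dnum W Ω p φ :=
  Finset.sum_nonneg fun x _ => Finset.sum_nonneg fun y _ =>
    mul_nonneg (Real.rpow_nonneg (abs_nonneg _) _) (W.nonneg x y)

lemma dden_nonneg (W : WeightedGraph V) (Ω : Set V) (p : ℝ) (φ : V → ℝ) :
    0 ≤ dden W Ω p φ :=
  mul_nonneg two_pos.le <| Finset.sum_nonneg fun x _ =>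
    mul_nonneg (Real.rpow_nonneg (abs_nonneg _) _) (vwt_nonneg W x)

lemma dnum_smul (W : WeightedGraph V) (Ω : Set V) (p : ℝ) (c : ℝ) (φ : V → ℝ) :
    dnum W Ω p (c • φ) = |c| ^ p * dnum W Ω p φ := by
  rw [dnum, dnum, Finset.mul_sum]
  refine Finset.sum_congr rfl fun x _ => ?_
  rw [Finset.mul_sum]
  refine Finset.sum_congr rfl fun y _ => ?_
  have h : (c • φ) y - (c • φ) x = c * (φ y - φ x) := by
    simp [mul_sub]
  rw [h, abs_mul, Real.mul_rpow (abs_nonneg _) (abs_nonneg _), mul_assoc]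

lemma dden_smul (W : WeightedGraph V) (Ω : Set V) (p : ℝ) (c : ℝ) (φ : V → ℝ) :
    dden W Ω p (c • φ) = |c| ^ p * dden W Ω p φ := by
  have h : ∀ x, |(c • φ) x| ^ p * W.vwt x = |c| ^ p * (|φ x| ^ p * W.vwt x) := fun x => by
    simp only [Pi.smul_apply, smul_eq_mul, abs_mul]
    rw [Real.mul_rpow (abs_nonneg _) (abs_nonneg _), mul_assoc]
  rw [dden, dden, Finset.sum_congr rfl fun x _ => h x, ← Finset.mul_sum]
  ring

lemma drq_smul (W : WeightedGraph V) (Ω : Set V) (p : ℝ) {c : ℝ} (hc : c ≠ 0) (φ : V → ℝ) :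
    dnum W Ω p (c • φ) / dden W Ω p (c • φ) = dnum W Ω p φ / dden W Ω p φ := by
  rw [dnum_smul, dden_smul,
    mul_div_mul_left _ _ (ne_of_gt (Real.rpow_pos_of_pos (abs_pos.2 hc) p))]

lemma sum_filter_iUnion {k : ℕ} (Ω : Fin (k + 1) → Set V)
    (hdisj : ∀ α β, α ≠ β → Disjoint (Ω α) (Ω β)) (g : V → ℝ) :
    ∑ x ∈ Finset.univ.filter (· ∈ ⋃ α, Ω α), g x
      = ∑ α, ∑ x ∈ Finset.univ.filter (· ∈ Ω α), g x := by
  have he : Finset.univ.filter (· ∈ ⋃ α, Ω α)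
      = Finset.univ.biUnion (fun α => Finset.univ.filter (· ∈ Ω α)) := by
    ext x; simp [Set.mem_iUnion]
  rw [he, Finset.sum_biUnion]
  intro a _ b _ hab
  simp only [Finset.disjoint_left, Finset.mem_filter, Finset.mem_univ, true_and]
  intro x hxa hxb
  exact Set.disjoint_left.mp (hdisj a b hab) hxa hxb

lemma nuD_nonneg (W : WeightedGraph V) (Ω : Set V) (k : ℕ) (p : ℝ) :
    0 ≤ W.nuD Ω k p := by
  apply Real.sInf_nonneg
  rintro s ⟨L, -, -, rfl⟩
  apply Real.sSup_nonneg
  rintro r ⟨φ, -, -, rfl⟩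
  exact div_nonneg (dnum_nonneg W Ω p φ) (dden_nonneg W Ω p φ)

lemma key (W : WeightedGraph V) (p : ℝ) (hp : 1 ≤ p) (k : ℕ) (Ω : Fin (k + 1) → Set V)
    (hdisj : ∀ α β, α ≠ β → Disjoint (Ω α) (Ω β))
    (hvwt : ∀ x, 0 < W.vwt x)
    (f : Fin (k + 1) → V → ℝ) (hf0 : ∀ α, f α ≠ 0)
    (hsupp : ∀ α x, x ∉ Ω α \ W.vbdry (Ω α) → f α x = 0)
    (M : ℝ) (hM : 0 ≤ M)
    (hrq : ∀ α, dnum W (Ω α) p (f α) / dden W (Ω α) p (f α) ≤ M) :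
    W.nuD (⋃ α, Ω α) (k + 1) p ≤ M := by
  have hp0 : p ≠ 0 := by intro h; rw [h] at hp; exact absurd hp (by norm_num)
  have hzp : (0 : ℝ) ^ p = 0 := Real.zero_rpow hp0
  have hfΩ : ∀ α x, x ∉ Ω α → f α x = 0 := fun α x hx => hsupp α x (fun h => hx h.1)
  have hsuppdisj : ∀ α β x, α ≠ β → x ∈ Ω α → f β x = 0 := fun α β x hab hx =>
    hfΩ β x (fun hxb => Set.disjoint_left.mp (hdisj α β hab) hx hxb)
  have hwit : ∀ α, ∃ x, f α x ≠ 0 ∧ x ∈ Ω α := by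
    intro α
    obtain ⟨x, hx⟩ : ∃ x, f α x ≠ 0 := by
      by_contra h; push_neg at h; exact hf0 α (funext h)
    exact ⟨x, hx, by by_contra h; exact hx (hfΩ α x h)⟩
  have hD : ∀ α, 0 < ∑ x ∈ Finset.univ.filter (· ∈ Ω α), |f α x| ^ p * W.vwt x := by
    intro α
    obtain ⟨x, hx, hxΩ⟩ := hwit α
    refine Finset.sum_pos' (fun y _ => mul_nonneg (Real.rpow_nonneg (abs_nonneg _) _)
      (vwt_nonneg W y)) ⟨x, by simp [hxΩ], ?_⟩
    exact mul_pos (Real.rpow_pos_of_pos (abs_pos.2 hx) p) (hvwt x)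
  have hdden_pos : ∀ α, 0 < dden W (Ω α) p (f α) := fun α =>
    mul_pos two_pos (hD α)
  have hNle : ∀ α, dnum W (Ω α) p (f α) ≤ M * dden W (Ω α) p (f α) := fun α =>
    (div_le_iff₀ (hdden_pos α)).mp (hrq α)
  set L := Submodule.span ℝ (Set.range f) with hL
  have hli : LinearIndependent ℝ f := by
    rw [Fintype.linearIndependent_iff]
    intro g hg α
    obtain ⟨x, hx, hxΩ⟩ := hwit α
    have hgx := congrFun hg x
    rw [Finset.sum_apply] at hgx
    have : ∑ β, g β * f β x = 0 := by
      simpa [smul_eq_mul] using hgx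
    rw [Finset.sum_eq_single α (fun β _ hβ => by
        rw [hsuppdisj α β x (Ne.symm hβ) hxΩ, mul_zero])
      (fun h => absurd (Finset.mem_univ α) h)] at this
    exact (mul_eq_zero.mp this).resolve_right hx
  have hrank : Module.finrank ℝ L = k + 1 := by
    rw [hL, finrank_span_eq_card hli, Fintype.card_fin]
  have hsub : ∀ α, Ω α \ W.vbdry (Ω α) ⊆ (⋃ γ, Ω γ) \ W.vbdry (⋃ γ, Ω γ) := by
    intro α x hx
    refine ⟨Set.mem_iUnion.2 ⟨α, hx.1⟩, ?_⟩
    rintro ⟨-, y, hyU, hwy⟩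
    exact hx.2 ⟨hx.1, y, fun hyα => hyU (Set.mem_iUnion.2 ⟨α, hyα⟩), hwy⟩
  have hvan : ∀ φ ∈ L, ∀ x, x ∉ (⋃ γ, Ω γ) \ W.vbdry (⋃ γ, Ω γ) → φ x = 0 := by
    intro φ hφ x hx
    obtain ⟨c, rfl⟩ := (Submodule.mem_span_range_iff_exists_fun ℝ).mp hφ
    rw [Finset.sum_apply]
    refine Finset.sum_eq_zero fun α _ => ?_
    have h0 : f α x = 0 := hsupp α x (fun h => hx (hsub α h))
    simp [h0]
  have hmem : sSup {r | ∃ φ ∈ L, φ ≠ 0 ∧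
        r = dnum W (⋃ γ, Ω γ) p φ / dden W (⋃ γ, Ω γ) p φ} ∈
      {s | ∃ L' : Submodule ℝ (V → ℝ), Module.finrank ℝ L' = k + 1 ∧
        (∀ φ ∈ L', ∀ x, x ∉ (⋃ γ, Ω γ) \ W.vbdry (⋃ γ, Ω γ) → φ x = 0) ∧
        s = sSup {r | ∃ φ ∈ L', φ ≠ 0 ∧
          r = dnum W (⋃ γ, Ω γ) p φ / dden W (⋃ γ, Ω γ) p φ}} :=
    ⟨L, hrank, hvan, rfl⟩
  have hbdd : BddBelow {s | ∃ L' : Submodule ℝ (V → ℝ), Module.finrank ℝ L' = k + 1 ∧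
        (∀ φ ∈ L', ∀ x, x ∉ (⋃ γ, Ω γ) \ W.vbdry (⋃ γ, Ω γ) → φ x = 0) ∧
        s = sSup {r | ∃ φ ∈ L', φ ≠ 0 ∧
          r = dnum W (⋃ γ, Ω γ) p φ / dden W (⋃ γ, Ω γ) p φ}} := by
    refine ⟨0, ?_⟩
    rintro s ⟨L', -, -, rfl⟩
    apply Real.sSup_nonneg
    rintro r ⟨φ, -, -, rfl⟩
    exact div_nonneg (dnum_nonneg _ _ _ _) (dden_nonneg _ _ _ _)
  have h1 : W.nuD (⋃ γ, Ω γ) (k + 1) p ≤ sSup {r | ∃ φ ∈ L, φ ≠ 0 ∧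
      r = dnum W (⋃ γ, Ω γ) p φ / dden W (⋃ γ, Ω γ) p φ} := csInf_le hbdd hmem
  refine h1.trans (Real.sSup_le ?_ hM)
  rintro r ⟨φ, hφL, hφ0, rfl⟩
  obtain ⟨c, rfl⟩ := (Submodule.mem_span_range_iff_exists_fun ℝ).mp hφL
  have hc : ∃ α, c α ≠ 0 := by
    by_contra h
    push_neg at h
    exact hφ0 (Finset.sum_eq_zero fun α _ => by rw [h α, zero_smul])
  have hφval : ∀ α, ∀ x ∈ Ω α, (∑ β, c β • f β) x = c α * f α x := by
    intro α x hx
    rw [Finset.sum_apply]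
    rw [Finset.sum_eq_single α (fun β _ hβ => by
        simp [hsuppdisj α β x (Ne.symm hβ) hx])
      (fun h => absurd (Finset.mem_univ α) h)]
    simp
  have hnum : dnum W (⋃ γ, Ω γ) p (∑ β, c β • f β)
      = ∑ α, |c α| ^ p * dnum W (Ω α) p (f α) := by
    rw [dnum, sum_filter_iUnion Ω hdisj]
    refine Finset.sum_congr rfl fun α _ => ?_
    rw [dnum, Finset.mul_sum]
    refine Finset.sum_congr rfl fun x hx => ?_
    have hxΩ : x ∈ Ω α := (Finset.mem_filter.mp hx).2
    rw [sum_filter_iUnion Ω hdisj]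
    rw [Finset.sum_eq_single α ?_ (fun h => absurd (Finset.mem_univ α) h)]
    · rw [Finset.mul_sum]
      refine Finset.sum_congr rfl fun y hy => ?_
      have hyΩ : y ∈ Ω α := (Finset.mem_filter.mp hy).2
      rw [hφval α y hyΩ, hφval α x hxΩ, ← mul_sub, abs_mul,
        Real.mul_rpow (abs_nonneg _) (abs_nonneg _), mul_assoc]
    · intro β _ hβα
      refine Finset.sum_eq_zero fun y hy => ?_
      have hyΩ : y ∈ Ω β := (Finset.mem_filter.mp hy).2
      rcases eq_or_lt_of_le (W.nonneg x y) with h | h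
      · rw [← h, mul_zero]
      · have hyα : y ∉ Ω α := fun hyα => Set.disjoint_left.mp (hdisj β α hβα) hyΩ hyα
        have hxβ : x ∉ Ω β := fun hxβ => Set.disjoint_left.mp (hdisj α β (Ne.symm hβα)) hxΩ hxβ
        have hφx : (∑ β, c β • f β) x = 0 := by
          rw [hφval α x hxΩ, hsupp α x (fun hmem => hmem.2 ⟨hxΩ, y, hyα, h⟩), mul_zero]
        have hφy : (∑ β, c β • f β) y = 0 := by
          rw [hφval β y hyΩ,
            hsupp β y (fun hmem => hmem.2 ⟨hyΩ, x, hxβ, by rw [W.symm y x]; exact h⟩),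
            mul_zero]
        rw [hφx, hφy, sub_zero, abs_zero, hzp, zero_mul]
  have hden : dden W (⋃ γ, Ω γ) p (∑ β, c β • f β)
      = 2 * ∑ α, |c α| ^ p * (∑ x ∈ Finset.univ.filter (· ∈ Ω α), |f α x| ^ p * W.vwt x) := by
    rw [dden, sum_filter_iUnion Ω hdisj]
    congr 1
    refine Finset.sum_congr rfl fun α _ => ?_
    rw [Finset.mul_sum]
    refine Finset.sum_congr rfl fun x hx => ?_
    have hxΩ : x ∈ Ω α := (Finset.mem_filter.mp hx).2
    rw [hφval α x hxΩ, abs_mul, Real.mul_rpow (abs_nonneg _) (abs_nonneg _), mul_assoc]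
  obtain ⟨α₀, hα₀⟩ := hc
  have hDpos : 0 < 2 * ∑ α, |c α| ^ p * (∑ x ∈ Finset.univ.filter (· ∈ Ω α),
      |f α x| ^ p * W.vwt x) := by
    refine mul_pos two_pos (Finset.sum_pos' (fun α _ =>
      mul_nonneg (Real.rpow_nonneg (abs_nonneg _) _) (hD α).le) ⟨α₀, Finset.mem_univ _, ?_⟩)
    exact mul_pos (Real.rpow_pos_of_pos (abs_pos.2 hα₀) p) (hD α₀)
  rw [hnum, hden, div_le_iff₀ hDpos]
  calc ∑ α, |c α| ^ p * dnum W (Ω α) p (f α)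
      ≤ ∑ α, |c α| ^ p * (M * dden W (Ω α) p (f α)) := by
        refine Finset.sum_le_sum fun α _ => ?_
        exact mul_le_mul_of_nonneg_left (hNle α) (Real.rpow_nonneg (abs_nonneg _) _)
    _ = M * (2 * ∑ α, |c α| ^ p * (∑ x ∈ Finset.univ.filter (· ∈ Ω α),
          |f α x| ^ p * W.vwt x)) := by
        rw [Finset.mul_sum, Finset.mul_sum]
        refine Finset.sum_congr rfl fun α _ => ?_
        rw [dden]
        ring

end DDP

open WeightedGraph in

/-- Discrete domain decomposing principle (Lemma 8.4): for pairwise disjoint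
subsets `Ω_0, …, Ω_k ⊆ V`, each with nonempty interior `Ω_α \ ∂ᵥΩ_α`,
`ν^D_{k+1,p}(⨆ Ω_α, μ) ≤ max_α ν^D_{1,p}(Ω_α, μ)`. -/
theorem nuD_disjUnion_le_max
    {V : Type*} [Fintype V] (W : WeightedGraph V) (p : ℝ) (hp : 1 ≤ p)
    (k : ℕ) (Ω : Fin (k + 1) → Set V)
    (hdisj : ∀ α β, α ≠ β → Disjoint (Ω α) (Ω β))
    (hint : ∀ α, (Ω α \ W.vbdry (Ω α)).Nonempty) :
    W.nuD (⋃ α, Ω α) (k + 1) p ≤ ⨆ α, W.nuD (Ω α) 1 p := by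
  rcases Nat.eq_zero_or_pos k with rfl | hk
  · have hU : (⋃ α : Fin 1, Ω α) = Ω 0 := by
      ext x
      simp only [Set.mem_iUnion]
      exact ⟨fun ⟨i, h⟩ => by rwa [Subsingleton.elim i 0] at h, fun h => ⟨0, h⟩⟩
    have h2 : (⨆ α, W.nuD (Ω α) 1 p) = W.nuD (Ω 0) 1 p := by
      apply le_antisymm
      · refine ciSup_le fun i => ?_
        have hi : i = 0 := Fin.fin_one_eq_zero i
        rw [hi]
      · exact le_ciSup (f := fun α => W.nuD (Ω α) 1 p)
          (Set.Finite.bddAbove (Set.finite_range _)) 0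
    rw [hU, h2]
  · set a : Fin (k + 1) := ⟨0, by omega⟩
    set b : Fin (k + 1) := ⟨1, by omega⟩
    have hab : a ≠ b := by simp [a, b, Fin.ext_iff]
    obtain ⟨x₀, hx₀⟩ := hint a
    obtain ⟨x₁, hx₁⟩ := hint b
    have hne : x₀ ≠ x₁ := fun h =>
      Set.disjoint_left.mp (hdisj a b hab) hx₀.1 (h ▸ hx₁.1)
    have hvwt : ∀ x, 0 < W.vwt x := by
      intro x
      have hz : ∃ z, z ≠ x := by
        by_cases h : x₀ = x
        · exact ⟨x₁, fun hh => hne (h.trans hh.symm)⟩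
        · exact ⟨x₀, h⟩
      obtain ⟨z, hz⟩ := hz
      obtain ⟨wk⟩ := W.connected.preconnected x z
      have hadj : W.G.Adj x (wk.getVert 1) :=
        wk.adj_snd (SimpleGraph.Walk.not_nil_of_ne (Ne.symm hz))
      exact Finset.sum_pos' (fun y _ => W.nonneg x y)
        ⟨wk.getVert 1, Finset.mem_univ _, (W.pos_iff_adj x _).2 hadj⟩
    have hM0 : 0 ≤ ⨆ α, W.nuD (Ω α) 1 p :=
      Real.iSup_nonneg fun α => DDP.nuD_nonneg W (Ω α) 1 p
    refine le_of_forall_pos_le_add fun ε hε => ?_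
    have hex : ∀ α, ∃ g : V → ℝ, g ≠ 0 ∧ (∀ x, x ∉ Ω α \ W.vbdry (Ω α) → g x = 0) ∧
        DDP.dnum W (Ω α) p g / DDP.dden W (Ω α) p g < W.nuD (Ω α) 1 p + ε := by
      intro α
      obtain ⟨x₂, hx₂⟩ := hint α
      set g₀ : V → ℝ := fun y => if y = x₂ then 1 else 0 with hg₀def
      have hg₀ : g₀ ≠ 0 := by
        intro h
        have := congrFun h x₂
        simp [hg₀def] at this
      have hSne : {s | ∃ L' : Submodule ℝ (V → ℝ), Module.finrank ℝ L' = 1 ∧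
          (∀ φ ∈ L', ∀ x, x ∉ Ω α \ W.vbdry (Ω α) → φ x = 0) ∧
          s = sSup {r | ∃ φ ∈ L', φ ≠ 0 ∧
            r = DDP.dnum W (Ω α) p φ / DDP.dden W (Ω α) p φ}}.Nonempty := by
        refine ⟨_, Submodule.span ℝ {g₀}, finrank_span_singleton hg₀, ?_, rfl⟩
        intro φ hφ x hx
        obtain ⟨d, rfl⟩ := Submodule.mem_span_singleton.mp hφ
        have hxx : x ≠ x₂ := fun h => hx (h ▸ hx₂)
        simp [hg₀def, hxx]
      have hlt : W.nuD (Ω α) 1 p < W.nuD (Ω α) 1 p + ε := lt_add_of_pos_right _ hε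
      obtain ⟨s, hs, hslt⟩ := exists_lt_of_csInf_lt hSne hlt
      obtain ⟨L', hL1, hvan', rfl⟩ := hs
      obtain ⟨v, hv0, hv⟩ := finrank_eq_one_iff'.mp hL1
      have hvc0 : (v : V → ℝ) ≠ 0 := fun h => hv0 (Submodule.coe_eq_zero.mp h)
      have hTeq : {r | ∃ φ ∈ L', φ ≠ 0 ∧
          r = DDP.dnum W (Ω α) p φ / DDP.dden W (Ω α) p φ}
          = {DDP.dnum W (Ω α) p (v : V → ℝ) / DDP.dden W (Ω α) p (v : V → ℝ)} := by
        ext r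
        constructor
        · rintro ⟨φ, hφL, hφ0, rfl⟩
          obtain ⟨d, hd⟩ := hv ⟨φ, hφL⟩
          have hdφ : d • (v : V → ℝ) = φ := congrArg Subtype.val hd
          have hd0 : d ≠ 0 := fun h => hφ0 (by rw [← hdφ, h, zero_smul])
          rw [Set.mem_singleton_iff, ← hdφ, DDP.drq_smul W (Ω α) p hd0]
        · rintro rfl
          exact ⟨(v : V → ℝ), v.2, hvc0, rfl⟩
      rw [hTeq, csSup_singleton] at hslt
      exact ⟨(v : V → ℝ), hvc0, fun x hx => hvan' _ v.2 x hx, hslt⟩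
    choose f hf0 hsupp hflt using hex
    refine DDP.key W p hp k Ω hdisj hvwt f hf0 hsupp _ (by positivity) fun α => ?_
    exact (hflt α).le.trans (add_le_add_left
      (le_ciSup (f := fun α => W.nuD (Ω α) 1 p)
        (Set.Finite.bddAbove (Set.finite_range _)) α) ε)
end
end
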